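/- arXiv:1009.3291 — 2 statements merged into one kernel-verified Lean document; each statement's English description precedes it below -/
import Mathlib

section
/- Let p be a prime, p ≥ 5, and let A = ⌊(p-1)/3⌋. The number of triples (n, m, l) of integers with 1 ≤ 3n ≤ p-1, 1 ≤ 3m+1 ≤ p-1, 1 ≤ 3l+2 ≤ p-1 such that 3n ≡ 3m+1-y ≡ 3l+2-2y (mod p) has a solution y, is at most A²/2 + A. -/
/-- Let `p ≥ 5` be prime and `A = ⌊(p-1)/3⌋`. The number of triples `(n, m, l)` with
`1 ≤ 3n ≤ p-1`, `1 ≤ 3m+1 ≤ p-1`, `1 ≤ 3l+2 ≤ p-1` such that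
`3n ≡ 3m+1-y ≡ 3l+2-2y (mod p)` has a solution `y`, is at most `A²/2 + A`. -/
theorem stmt_4 (p : ℕ) (hp : p.Prime) (hp5 : 5 ≤ p) :
    (({t : ℕ × ℕ × ℕ |
        1 ≤ 3 * t.1 ∧ 3 * t.1 ≤ p - 1 ∧
        1 ≤ 3 * t.2.1 + 1 ∧ 3 * t.2.1 + 1 ≤ p - 1 ∧
        1 ≤ 3 * t.2.2 + 2 ∧ 3 * t.2.2 + 2 ≤ p - 1 ∧
        ∃ y : ZMod p, (3 * t.1 : ZMod p) = 3 * t.2.1 + 1 - y ∧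
          (3 * t.1 : ZMod p) = 3 * t.2.2 + 2 - 2 * y}.ncard : ℚ)) ≤
      (((p - 1) / 3 : ℕ) : ℚ)^2 / 2 + (((p - 1) / 3 : ℕ) : ℚ) := by
  have hp0 : 0 < p := by omega
  haveI : NeZero p := ⟨by omega⟩
  set A : ℕ := (p - 1) / 3 with hA
  have h3p : ¬ (3 ∣ p) := by
    intro h
    rcases (Nat.Prime.eq_one_or_self_of_dvd hp 3 h) with h' | h' <;> omega
  set S : Set (ℕ × ℕ × ℕ) := {t : ℕ × ℕ × ℕ |
        1 ≤ 3 * t.1 ∧ 3 * t.1 ≤ p - 1 ∧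
        1 ≤ 3 * t.2.1 + 1 ∧ 3 * t.2.1 + 1 ≤ p - 1 ∧
        1 ≤ 3 * t.2.2 + 2 ∧ 3 * t.2.2 + 2 ≤ p - 1 ∧
        ∃ y : ZMod p, (3 * t.1 : ZMod p) = 3 * t.2.1 + 1 - y ∧
          (3 * t.1 : ZMod p) = 3 * t.2.2 + 2 - 2 * y} with hS
  haveI : Fact p.Prime := ⟨hp⟩
  have h3ne : (3 : ZMod p) ≠ 0 := by
    have : ((3 : ℕ) : ZMod p) ≠ 0 := by
      rw [Ne, ZMod.natCast_eq_zero_iff]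
      intro h
      have := Nat.le_of_dvd (by norm_num) h
      omega
    simpa using this
  have key : ∀ t ∈ S, 1 ≤ t.1 ∧ t.1 ≤ A ∧ t.2.2 < A ∧ t.1 + t.2.2 = 2 * t.2.1 := by
    rintro ⟨n, m, l⟩ ⟨h1, h2, h3, h4, h5, h6, y, hy1, hy2⟩
    dsimp only at *
    have hcast : ((n + l : ℕ) : ZMod p) = ((2 * m : ℕ) : ZMod p) := by
      push_cast
      have h33 : (3 : ZMod p) * ((n : ZMod p) + l) = 3 * (2 * m) := by
        linear_combination 2 * hy1 - hy2
      exact mul_left_cancel₀ h3ne h33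
    have hmodeq : (n + l) % p = (2 * m) % p :=
      (ZMod.natCast_eq_natCast_iff _ _ _).mp hcast
    have hlt1 : n + l < p := by omega
    have hlt2 : 2 * m < p := by omega
    rw [Nat.mod_eq_of_lt hlt1, Nat.mod_eq_of_lt hlt2] at hmodeq
    refine ⟨by omega, by omega, by omega, hmodeq⟩
  set Tf : Finset (ℕ × ℕ) :=
    (Finset.Icc 1 A ×ˢ Finset.range A).filter (fun q => q.1 % 2 = q.2 % 2) with hTfdef
  have hsub : (fun t : ℕ × ℕ × ℕ => (t.1, t.2.2)) '' S ⊆ ↑Tf := by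
    rintro ⟨a, b⟩ ⟨t, ht, heq⟩
    obtain ⟨k1, k2, k3, k4⟩ := key t ht
    simp only [Prod.mk.injEq] at heq
    obtain ⟨rfl, rfl⟩ := heq
    simp only [hTfdef, Finset.coe_filter, Finset.mem_product, Finset.mem_Icc,
      Finset.mem_range, Set.mem_setOf_eq]
    exact ⟨⟨⟨k1, k2⟩, k3⟩, by omega⟩
  have hinj : Set.InjOn (fun t : ℕ × ℕ × ℕ => (t.1, t.2.2)) S := by
    rintro ⟨n1, m1, l1⟩ h1 ⟨n2, m2, l2⟩ h2 heq
    obtain ⟨_, _, _, e1⟩ := key _ h1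
    obtain ⟨_, _, _, e2⟩ := key _ h2
    simp only [Prod.mk.injEq] at heq ⊢
    dsimp only at e1 e2
    omega
  have hcard : S.ncard ≤ Tf.card := by
    calc S.ncard = ((fun t : ℕ × ℕ × ℕ => (t.1, t.2.2)) '' S).ncard :=
          (Set.ncard_image_of_injOn hinj).symm
      _ ≤ (↑Tf : Set (ℕ × ℕ)).ncard := Set.ncard_le_ncard hsub Tf.finite_toSet
      _ = Tf.card := Set.ncard_coe_finset Tf
  have hTf : Tf.card ≤ A * ((A + 1) / 2) := by
    have hmaps : ∀ q ∈ Tf, (fun q : ℕ × ℕ => (q.1, q.2 / 2)) q ∈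
        Finset.Icc 1 A ×ˢ Finset.range ((A + 1) / 2) := by
      rintro ⟨a, b⟩ hq
      simp only [hTfdef, Finset.mem_filter, Finset.mem_product, Finset.mem_Icc,
        Finset.mem_range] at hq ⊢
      omega
    have hinj2 : Set.InjOn (fun q : ℕ × ℕ => (q.1, q.2 / 2)) ↑Tf := by
      rintro ⟨a1, b1⟩ h1 ⟨a2, b2⟩ h2 heq
      simp only [hTfdef, Finset.coe_filter, Finset.mem_product, Finset.mem_Icc,
        Finset.mem_range, Set.mem_setOf_eq] at h1 h2
      simp only [Prod.mk.injEq] at heq ⊢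
      omega
    have := Finset.card_le_card_of_injOn _ hmaps hinj2
    simpa [Nat.card_Icc] using this
  have hQ : (S.ncard : ℚ) ≤ ((A * ((A + 1) / 2) : ℕ) : ℚ) := by
    exact_mod_cast hcard.trans hTf
  have h2le : 2 * (A * ((A + 1) / 2)) ≤ A * (A + 1) :=
    calc 2 * (A * ((A + 1) / 2)) = A * (2 * ((A + 1) / 2)) := by ring
      _ ≤ A * (A + 1) := Nat.mul_le_mul_left _ (by omega)
  have hQ2 : ((A * ((A + 1) / 2) : ℕ) : ℚ) ≤ ((A : ℚ) * ((A : ℚ) + 1)) / 2 := by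
    have h := (Nat.cast_le (α := ℚ)).mpr h2le
    push_cast at h
    rw [Nat.cast_mul]
    linarith
  have hA0 : (0 : ℚ) ≤ (A : ℚ) := Nat.cast_nonneg A
  calc (S.ncard : ℚ) ≤ ((A : ℚ) * ((A : ℚ) + 1)) / 2 := hQ.trans hQ2
    _ ≤ (A : ℚ) ^ 2 / 2 + (A : ℚ) := by nlinarith
end

section
/- Let p be prime, k ≥ 3, and 0 ≤ v₁ < v₂ < … < v_k ≤ r-1 with r ≤ p. Given m₁, …, m_k in Z_p, the parity groups B_{m₁,v₁}, …, B_{m_k,v_k} have a common block in some column j ∈ {2,…,p} if and only if there exists y with y ≡ (m₂-m₁)/(v₂-v₁) ≡ (m₃-m₂)/(v₃-v₂) ≡ … ≡ (m_k-m_{k-1})/(v_k-v_{k-1}) (mod p), where j = y+1. -/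
/-- Let `p` be prime, `k ≥ 3`, and `0 ≤ v₁ < v₂ < … < v_k ≤ r-1` with `r ≤ p` (slopes
indexed `1,…,k`, distinct mod `p`). Given `m₁, …, m_k` in `Z_p`, the parity groups
`B_{mᵢ,vᵢ}` have a common block in some column `j = y+1` if and only if there exists
`y` with `y ≡ (m₂-m₁)/(v₂-v₁) ≡ … ≡ (m_k-m_{k-1})/(v_k-v_{k-1}) (mod p)`,
where a common block in column `y+1` means `m₁ - v₁y ≡ m₂ - v₂y ≡ … ≡ m_k - v_ky`. -/
theorem stmt_16 (p : ℕ) [hp : Fact p.Prime] (k r : ℕ) (hk : 3 ≤ k) (hr : r ≤ p)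
    (v : ℕ → ℕ) (hv : ∀ i j, 1 ≤ i → i < j → j ≤ k → v i < v j) (hvr : v k ≤ r - 1)
    (m : ℕ → ZMod p) :
    (∃ y : ZMod p, ∀ i, 1 ≤ i → i ≤ k → m i - (v i : ZMod p) * y = m 1 - (v 1 : ZMod p) * y) ↔
    (∃ y : ZMod p, ∀ i, 1 ≤ i → i < k →
      y = (m (i + 1) - m i) / ((v (i + 1) : ZMod p) - (v i : ZMod p))) := by
  have h1k : 1 < k := by omega
  have hvk1 : 1 ≤ v k := by
    have := hv 1 k le_rfl h1k le_rfl
    omega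
  have hvkp : v k < p := by omega
  have hlt : ∀ i, 1 ≤ i → i ≤ k → v i < p := by
    intro i h1 hik
    rcases eq_or_lt_of_le hik with h | h
    · exact h ▸ hvkp
    · have := hv i k h1 h le_rfl; omega
  have hne : ∀ i, 1 ≤ i → i < k → ((v (i + 1) : ZMod p) - (v i : ZMod p)) ≠ 0 := by
    intro i h1 hik hcontra
    have hvlt : v i < v (i + 1) := hv i (i + 1) h1 (by omega) (by omega)
    have h1 : ((v (i + 1) : ZMod p)) = (v i : ZMod p) := by
      linear_combination hcontra
    have := (ZMod.natCast_eq_natCast_iff' _ _ _).mp h1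
    rw [Nat.mod_eq_of_lt (hlt _ (by omega) (by omega)),
        Nat.mod_eq_of_lt (hlt _ (by omega) (by omega))] at this
    omega
  constructor
  · rintro ⟨y, hy⟩
    refine ⟨y, fun i h1 hik => ?_⟩
    have e1 := hy i h1 (by omega)
    have e2 := hy (i + 1) (by omega) (by omega)
    rw [eq_div_iff (hne i h1 hik)]
    linear_combination e1 - e2
  · rintro ⟨y, hy⟩
    refine ⟨y, fun i h1 hik => ?_⟩
    induction i with
    | zero => omega
    | succ n ih =>
      rcases Nat.eq_or_lt_of_le h1 with h | h
      · simp [← h]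
      · have hn1 : 1 ≤ n := by omega
        have hnk : n < k := by omega
        have e := hy n hn1 hnk
        rw [eq_div_iff (hne n hn1 hnk)] at e
        have := ih hn1 (by omega)
        linear_combination this - e
end
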